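/- Let μ > 0, ε ∈ (0, μ/(3e)) and δ ∈ (0,1). Then the solution of the Bernoulli initial value problem y'(t) = (μ - ε e^{-δ t}) y(t) - μ e^{ε} y(t)^2 with y(0) = y₀ > 0 satisfies y(t) ≥ ( e^{ε/δ + ε}/y₀ + μ e^{ε}/(μ - ε) )^{-1} for all t ≥ 0. -/

import Mathlib

theorem stmt_4 (μ ε δ y₀ : ℝ) (hμ : 0 < μ) (hε : 0 < ε) (hεμ : ε < μ / (3 * Real.exp 1))
    (hδ : δ ∈ Set.Ioo (0 : ℝ) 1) (hy₀ : 0 < y₀) (y : ℝ → ℝ)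
    (hy : ∀ t, 0 ≤ t →
      HasDerivAt y ((μ - ε * Real.exp (-δ * t)) * y t - μ * Real.exp ε * (y t) ^ 2) t)
    (hinit : y 0 = y₀) :
    ∀ t, 0 ≤ t →
      (Real.exp (ε / δ + ε) / y₀ + μ * Real.exp ε / (μ - ε))⁻¹ ≤ y t := by
  obtain ⟨hδ0, hδ1⟩ := hδ
  have h3e : (1:ℝ) < 3 * Real.exp 1 := by
    nlinarith [Real.exp_one_gt_d9]
  have hεμ' : ε < μ := lt_trans hεμ (div_lt_self hμ h3e)
  have hμε : 0 < μ - ε := sub_pos.mpr hεμ'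
  set M : ℝ := Real.exp (ε / δ + ε) / y₀ + μ * Real.exp ε / (μ - ε) with hMdef
  have hM0 : 0 < M :=
    add_pos (div_pos (Real.exp_pos _) hy₀) (div_pos (mul_pos hμ (Real.exp_pos _)) hμε)
  have hMinvpos : 0 < M⁻¹ := inv_pos.mpr hM0
  have h1exp : (1:ℝ) < Real.exp (ε / δ + ε) := by
    have h0 : (0:ℝ) < ε / δ + ε := by positivity
    calc (1:ℝ) = Real.exp 0 := Real.exp_zero.symm
      _ < Real.exp (ε / δ + ε) := Real.exp_lt_exp.mpr h0
  have hMy : M⁻¹ < y₀ := by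
    have h1M : y₀⁻¹ < M := by
      have : y₀⁻¹ < Real.exp (ε / δ + ε) / y₀ := by
        rw [div_eq_mul_inv]
        nlinarith [inv_pos.mpr hy₀]
      have h2 : 0 < μ * Real.exp ε / (μ - ε) := div_pos (mul_pos hμ (Real.exp_pos _)) hμε
      linarith
    calc M⁻¹ < (y₀⁻¹)⁻¹ := by
          exact inv_strictAnti₀ (inv_pos.mpr hy₀) h1M
      _ = y₀ := inv_inv y₀
  have hkey : μ * Real.exp ε * M⁻¹ < μ - ε := by
    have h1 : μ * Real.exp ε / (μ - ε) < M := by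
      have : 0 < Real.exp (ε / δ + ε) / y₀ := div_pos (Real.exp_pos _) hy₀
      linarith
    have h2 : μ * Real.exp ε < M * (μ - ε) := by
      rw [div_lt_iff₀ hμε] at h1; linarith
    rw [mul_inv_lt_iff₀ hM0]
    linarith [h2]
  intro t ht
  by_contra hcon
  push_neg at hcon
  have hcontAt : ∀ s, 0 ≤ s → ContinuousAt y s := fun s hs => (hy s hs).continuousAt
  set S : Set ℝ := {s | 0 ≤ s ∧ y s ≤ M⁻¹} with hSdef
  have hSne : S.Nonempty := ⟨t, ht, hcon.le⟩
  have hSbdd : BddBelow S := ⟨0, fun x hx => hx.1⟩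
  have hSclosed : IsClosed S := by
    rw [← isSeqClosed_iff_isClosed]
    intro u p hu hup
    have hp0 : 0 ≤ p := ge_of_tendsto hup (Filter.Eventually.of_forall fun n => (hu n).1)
    refine ⟨hp0, ?_⟩
    have htd : Filter.Tendsto (fun n => y (u n)) Filter.atTop (nhds (y p)) :=
      ((hcontAt p hp0).tendsto).comp hup
    exact le_of_tendsto htd (Filter.Eventually.of_forall fun n => (hu n).2)
  set t₁ := sInf S with ht₁def
  have ht₁S : t₁ ∈ S := hSclosed.csInf_mem hSne hSbdd
  obtain ⟨ht₁0, hyt₁le⟩ := ht₁S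
  have ht₁pos : 0 < t₁ := by
    rcases ht₁0.lt_or_eq with h | h
    · exact h
    · exfalso
      rw [← h, hinit] at hyt₁le
      linarith
  have hlt : ∀ s, 0 ≤ s → s < t₁ → M⁻¹ < y s := by
    intro s hs0 hst
    by_contra hc
    push_neg at hc
    exact absurd (csInf_le hSbdd ⟨hs0, hc⟩) (not_le.mpr hst)
  have hyt₁ge : M⁻¹ ≤ y t₁ := by
    have htend : Filter.Tendsto y (nhdsWithin t₁ (Set.Iio t₁)) (nhds (y t₁)) :=
      ((hcontAt t₁ ht₁0).continuousWithinAt).tendsto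
    refine ge_of_tendsto htend ?_
    filter_upwards [Ioo_mem_nhdsLT_of_mem (Set.mem_Ioc.mpr ⟨ht₁pos, le_refl t₁⟩)] with s hs
    exact (hlt s hs.1.le hs.2).le
  have heq : y t₁ = M⁻¹ := le_antisymm hyt₁le hyt₁ge
  have hd := hy t₁ ht₁0
  have hdpos : 0 < (μ - ε * Real.exp (-δ * t₁)) * y t₁ - μ * Real.exp ε * (y t₁) ^ 2 := by
    rw [heq]
    have he1 : Real.exp (-δ * t₁) ≤ 1 := by
      rw [Real.exp_le_one_iff]
      nlinarith
    nlinarith [hkey, hMinvpos, he1, mul_pos hε hMinvpos]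
  have hslope := hasDerivAt_iff_tendsto_slope.mp hd
  have hev : ∀ᶠ s in nhdsWithin t₁ {t₁}ᶜ, 0 < slope y t₁ s :=
    hslope.eventually (eventually_gt_nhds hdpos)
  have hmono : nhdsWithin t₁ (Set.Iio t₁) ≤ nhdsWithin t₁ {t₁}ᶜ :=
    nhdsWithin_mono _ (fun x hx => ne_of_lt hx)
  have hev' : ∀ᶠ s in nhdsWithin t₁ (Set.Iio t₁), 0 < slope y t₁ s := hmono hev
  have hIoo : Set.Ioo 0 t₁ ∈ nhdsWithin t₁ (Set.Iio t₁) :=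
    Ioo_mem_nhdsLT_of_mem (Set.mem_Ioc.mpr ⟨ht₁pos, le_refl t₁⟩)
  obtain ⟨s, hss, hsI⟩ := (hev'.and (Filter.eventually_of_mem hIoo fun x hx => hx)).exists
  have hslt : s - t₁ < 0 := sub_neg.mpr hsI.2
  have hne : y s - y t₁ < 0 := by
    rw [slope_def_field] at hss
    rcases div_pos_iff.mp hss with ⟨_, h⟩ | ⟨h, _⟩
    · linarith
    · exact h
  have h1 : y s < M⁻¹ := by rw [heq] at hne; linarith
  exact absurd (hlt s hsI.1.le hsI.2) (not_lt.mpr h1.le)
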